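/- arXiv:1112.4617 — 3 statements merged into one kernel-verified Lean document; each statement's English description precedes it below -/
import Mathlib

section
/- Let d ≥ 3 and let R : [0,∞) → ℝ solve the ODE R'(τ) = (1/d)(R(τ)^{-d} - 1)R(τ) with initial data R(0) = R₀ > 0. Then R(τ) → 1 as τ → ∞, and there exists a constant C (depending on R₀ and d) such that |R(τ) - 1| ≤ C e^{-τ} for all τ ≥ 0. -/
open Real Filter

lemma aux_abs_sub_one_le (d : ℕ) (hd : 1 ≤ d) {x : ℝ} (hx : 0 < x) :
    |x - 1| ≤ |x ^ d - 1| := by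
  have h : x ^ d - 1 = (∑ i ∈ Finset.range d, x ^ i) * (x - 1) := (geom_sum_mul x d).symm
  rw [h, abs_mul]
  have hsum : 1 ≤ ∑ i ∈ Finset.range d, x ^ i := by
    have := Finset.single_le_sum (f := fun i => x ^ i)
      (fun i _ => le_of_lt (pow_pos hx i)) (Finset.mem_range.mpr hd)
    simpa using this
  have : |(∑ i ∈ Finset.range d, x ^ i)| = ∑ i ∈ Finset.range d, x ^ i :=
    abs_of_nonneg (le_trans zero_le_one hsum)
  nlinarith [abs_nonneg (x - 1)]

/-- If `d ≥ 3` and `R` is a positive solution on `[0,∞)` of the ODE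
`R'(τ) = (1/d)(R(τ)^{-d} - 1) R(τ)` with `R(0) = R₀ > 0`, then `R(τ) → 1` as `τ → ∞`
and `|R(τ) - 1| ≤ C e^{-τ}` for some constant `C` and all `τ ≥ 0`. -/
theorem stmt0 (d : ℕ) (hd : 3 ≤ d) (R : ℝ → ℝ) (R₀ : ℝ) (hR₀ : 0 < R₀)
    (hinit : R 0 = R₀)
    (hpos : ∀ τ : ℝ, 0 ≤ τ → 0 < R τ)
    (hode : ∀ τ : ℝ, 0 ≤ τ →
      HasDerivAt R ((1 / d) * ((R τ) ^ (-(d : ℤ)) - 1) * R τ) τ) :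
    Tendsto R atTop (nhds 1) ∧
      ∃ C : ℝ, ∀ τ : ℝ, 0 ≤ τ → |R τ - 1| ≤ C * Real.exp (-τ) := by
  have hd1 : 1 ≤ d := le_trans (by norm_num) hd
  have hdR : (d : ℝ) ≠ 0 := by positivity
  set g : ℝ → ℝ := fun t => Real.exp t * (R t ^ d - 1) with hg
  -- g has derivative 0 at every τ ≥ 0
  have hgderiv : ∀ τ : ℝ, 0 ≤ τ → HasDerivAt g 0 τ := by
    intro τ hτ
    have hR := hpos τ hτ
    have h1 : HasDerivAt (fun t => R t ^ d - 1)
        ((d : ℕ) * R τ ^ (d - 1) * ((1 / d) * ((R τ) ^ (-(d : ℤ)) - 1) * R τ)) τ :=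
      ((hode τ hτ).pow d).sub_const 1
    have h2 := (Real.hasDerivAt_exp τ).mul h1
    have hz : (R τ) ^ (-(d : ℤ)) = (R τ ^ d)⁻¹ := by
      rw [zpow_neg, zpow_natCast]
    have hpow : R τ ^ (d - 1) * R τ = R τ ^ d := by
      rw [← pow_succ]
      congr 1
      omega
    have hRd : R τ ^ d ≠ 0 := by positivity
    have hinner : (d : ℝ) * R τ ^ (d - 1) * ((1 / d) * ((R τ ^ d)⁻¹ - 1) * R τ)
        = (R τ ^ (d - 1) * R τ) * ((R τ ^ d)⁻¹ - 1) := by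
      field_simp
    rw [hz, hinner, hpow] at h2
    have key : Real.exp τ * (R τ ^ d - 1) + Real.exp τ * (R τ ^ d * ((R τ ^ d)⁻¹ - 1)) = 0 := by
      have : R τ ^ d * ((R τ ^ d)⁻¹ - 1) = 1 - R τ ^ d := by
        rw [mul_sub, mul_inv_cancel₀ hRd]
        ring
      rw [this]
      ring
    rw [key] at h2
    exact h2
  -- hence g is constant on [0, ∞)
  have hgconst : ∀ τ : ℝ, 0 ≤ τ → g τ = g 0 := by
    intro τ hτ
    have hcont : ContinuousOn g (Set.Icc 0 τ) := by
      intro x hx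
      exact ((hgderiv x hx.1).continuousAt).continuousWithinAt
    have := constant_of_has_deriv_right_zero hcont (fun x hx =>
      (hgderiv x hx.1).hasDerivWithinAt)
    exact this τ (Set.mem_Icc.mpr ⟨hτ, le_refl τ⟩)
  -- explicit formula
  have hformula : ∀ τ : ℝ, 0 ≤ τ → R τ ^ d - 1 = (R₀ ^ d - 1) * Real.exp (-τ) := by
    intro τ hτ
    have h := hgconst τ hτ
    simp only [g, Real.exp_zero, one_mul, hinit] at h
    have hexp : Real.exp τ ≠ 0 := (Real.exp_pos τ).ne'
    rw [Real.exp_neg]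
    field_simp
    linarith [h]
  set C : ℝ := |R₀ ^ d - 1| with hC
  have hbound : ∀ τ : ℝ, 0 ≤ τ → |R τ - 1| ≤ C * Real.exp (-τ) := by
    intro τ hτ
    calc |R τ - 1| ≤ |R τ ^ d - 1| := aux_abs_sub_one_le d hd1 (hpos τ hτ)
      _ = C * Real.exp (-τ) := by
          rw [hformula τ hτ, abs_mul, abs_of_pos (Real.exp_pos _)]
  constructor
  · have h0 : Tendsto (fun τ : ℝ => C * Real.exp (-τ)) atTop (nhds 0) := by
      have := Real.tendsto_exp_neg_atTop_nhds_zero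
      simpa using this.const_mul C
    have hsub : Tendsto (fun τ => R τ - 1) atTop (nhds 0) := by
      apply squeeze_zero_norm' _ h0
      filter_upwards [eventually_ge_atTop (0 : ℝ)] with τ hτ
      simpa [Real.norm_eq_abs] using hbound τ hτ
    have := hsub.add_const 1
    simpa using this
  · exact ⟨C, hbound⟩
end

section
/- Let d ≥ 3 and let R solve R'(τ) = (1/d)(R^{-d} - 1)R with R(0) = R₀ > 0. Then the function R̃(τ) = min{(1/2)τ^{1/(d+1)}, 1/2} satisfies R̃(τ) ≤ R(τ) for all τ ≥ 1; in particular R(τ) ≥ 1/2 and hence R(τ)^{-d} ≤ 2^d for all τ ≥ 1. -/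
open Real

/-- If `d ≥ 3` and `R` solves `R' = (1/d)(R^{-d} - 1)R` with `R(0) = R₀ > 0`,
then `R̃(τ) = min((1/2)τ^{1/(d+1)}, 1/2)` is a lower bound for `R` on `[1,∞)`; in particular
`R(τ) ≥ 1/2` and `R(τ)^{-d} ≤ 2^d` for all `τ ≥ 1`. -/
theorem stmt1 (d : ℕ) (hd : 3 ≤ d) (R : ℝ → ℝ) (R₀ : ℝ) (hR₀ : 0 < R₀)
    (hinit : R 0 = R₀)
    (hpos : ∀ τ : ℝ, 0 ≤ τ → 0 < R τ)
    (hode : ∀ τ : ℝ, 0 ≤ τ →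
      HasDerivAt R ((1 / d) * ((R τ) ^ (-(d : ℤ)) - 1) * R τ) τ) :
    ∀ τ : ℝ, 1 ≤ τ →
      min ((1 / 2) * τ ^ ((1 : ℝ) / (d + 1))) (1 / 2) ≤ R τ ∧
      (1 / 2 : ℝ) ≤ R τ ∧ (R τ) ^ (-(d : ℤ)) ≤ 2 ^ d := by
  have hd0 : (0 : ℝ) < d := by positivity
  -- the auxiliary function g τ = (R τ ^ d - 1) * exp τ has derivative 0 on [0,∞)
  set g : ℝ → ℝ := fun τ => (R τ ^ d - 1) * Real.exp τ with hg
  have hgderiv : ∀ τ : ℝ, 0 ≤ τ → HasDerivAt g 0 τ := by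
    intro τ hτ
    have hR := hpos τ hτ
    have hF : HasDerivAt (fun t => R t ^ d - 1)
        ((d : ℕ) * R τ ^ (d - 1) * ((1 / d) * ((R τ) ^ (-(d : ℤ)) - 1) * R τ)) τ :=
      ((hode τ hτ).pow d).sub_const 1
    have h2 : (d : ℕ) * R τ ^ (d - 1) * ((1 / d) * ((R τ) ^ (-(d : ℤ)) - 1) * R τ)
        = 1 - R τ ^ d := by
      have hz : (R τ) ^ (-(d : ℤ)) = (R τ ^ d)⁻¹ := by
        rw [zpow_neg, zpow_natCast]
      rw [hz]
      have hRd : R τ ^ d ≠ 0 := by positivity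
      have hsucc : d - 1 + 1 = d := Nat.succ_pred_eq_of_pos (show 0 < d by omega)
      have hpow : R τ ^ (d - 1) * R τ = R τ ^ d := by rw [← pow_succ, hsucc]
      have hdne : (d : ℝ) ≠ 0 := ne_of_gt hd0
      calc (d : ℝ) * R τ ^ (d - 1) * ((1 / d) * ((R τ ^ d)⁻¹ - 1) * R τ)
          = ((d : ℝ) * (1 / d)) * (((R τ ^ d)⁻¹ - 1) * (R τ ^ (d - 1) * R τ)) := by
            ring
        _ = ((R τ ^ d)⁻¹ - 1) * R τ ^ d := by
            rw [mul_one_div_cancel hdne, hpow, one_mul]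
        _ = 1 - R τ ^ d := by
            rw [sub_mul, inv_mul_cancel₀ hRd, one_mul]
    rw [h2] at hF
    have : HasDerivAt g _ τ := hF.mul (Real.hasDerivAt_exp τ)
    convert this using 1
    ring
  have hkey : ∀ τ : ℝ, 0 ≤ τ → g τ = g 0 := by
    intro τ hτ
    have := constant_of_has_deriv_right_zero (f := g) (a := 0) (b := τ)
      (fun x hx => ((hgderiv x hx.1).continuousAt.continuousWithinAt))
      (fun x hx => ((hgderiv x hx.1).hasDerivWithinAt))
    exact this τ ⟨hτ, le_refl τ⟩
  intro τ hτ
  have hτ0 : (0 : ℝ) ≤ τ := by linarith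
  have hgτ : (R τ ^ d - 1) * Real.exp τ = R 0 ^ d - 1 := by
    have := hkey τ hτ0
    simpa [hg] using this
  -- lower bound on R τ ^ d
  have hexp : Real.exp τ > 0 := Real.exp_pos τ
  have hFτ : R τ ^ d = 1 + (R 0 ^ d - 1) / Real.exp τ := by
    field_simp at hgτ ⊢
    linarith [hgτ]
  have hR0d : (0:ℝ) ≤ R 0 ^ d := by rw [hinit]; positivity
  have hexp1 : Real.exp 1 ≤ Real.exp τ := Real.exp_le_exp.mpr hτ
  have he2 : (2:ℝ) ≤ Real.exp 1 := by
    have := Real.add_one_le_exp (1:ℝ)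
    linarith
  have hFge : (1/2 : ℝ) ≤ R τ ^ d := by
    rw [hFτ]
    have h1 : (-1 : ℝ) / Real.exp τ ≤ (R 0 ^ d - 1) / Real.exp τ := by
      gcongr
      linarith
    have h3 : (1:ℝ)/Real.exp τ ≤ 1/2 := by
      rw [div_le_div_iff₀ hexp (by norm_num)]
      linarith
    have h4 : (-1:ℝ)/Real.exp τ = -(1/Real.exp τ) := by ring
    linarith
  have hhalf : (1/2 : ℝ) ≤ R τ := by
    by_contra h
    push_neg at h
    have hRpos := hpos τ hτ0
    have : R τ ^ d < (1/2 : ℝ) ^ d :=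
      pow_lt_pow_left₀ h (le_of_lt hRpos) (by omega)
    have hle : ((1:ℝ)/2) ^ d ≤ (1/2 : ℝ) := by
      calc ((1:ℝ)/2) ^ d ≤ ((1:ℝ)/2) ^ 1 :=
            pow_le_pow_of_le_one (by norm_num) (by norm_num) (by omega)
        _ = 1/2 := pow_one _
    linarith
  refine ⟨le_trans (min_le_right _ _) hhalf, hhalf, ?_⟩
  have hRpos := hpos τ hτ0
  rw [zpow_neg, zpow_natCast]
  rw [inv_le_comm₀ (by positivity) (by positivity)]
  calc ((2:ℝ)^d)⁻¹ = (1/2:ℝ)^d := by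
        rw [one_div, inv_pow]
    _ ≤ R τ ^ d := pow_le_pow_left₀ (by norm_num) hhalf d
end

section
/- Let d ≥ 3, q ∈ (2-d, 2], and C₁ > 0. Let R : [0,∞) → ℝ solve R'(t) = C₁(1 - R(t)^{d+q-2}) R(t)^{-d+1} with R(0) = R₀ > 1. Then R(t) is decreasing, stays in (1, R₀], and there is a constant C' > 0 such that |R(t) - 1| ≤ C' e^{-C₁(d+q-2) t} for all t ≥ 0. -/
open Real Set


/-- If `f` has nonpositive derivative on `(0,∞)` (with `HasDerivAt` on `[0,∞)`),
then `f t ≤ f 0` for `t ≥ 0`. -/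
lemma aux_le_of_deriv_nonpos {f f' : ℝ → ℝ}
    (hf : ∀ t ∈ Ici (0:ℝ), HasDerivAt f (f' t) t)
    (hf' : ∀ t ∈ Ioi (0:ℝ), f' t ≤ 0) : ∀ t ∈ Ici (0:ℝ), f t ≤ f 0 := by
  have hA : AntitoneOn f (Ici 0) := by
    apply antitoneOn_of_deriv_nonpos (convex_Ici 0)
    · exact fun x hx => (hf x hx).continuousAt.continuousWithinAt
    · intro x hx
      rw [interior_Ici] at hx
      exact (hf x (Set.mem_Ici.mpr (le_of_lt hx))).differentiableAt.differentiableWithinAt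
    · intro x hx
      rw [interior_Ici] at hx
      rw [(hf x (Set.mem_Ici.mpr (le_of_lt hx))).deriv]
      exact hf' x hx
  exact fun t ht => hA self_mem_Ici ht ht

/-- Chord bounds for `x ^ β - 1` on `[1, R₀]`. -/
lemma aux_rpow_chord (β : ℝ) (hβ : 0 ≤ β) (R₀ : ℝ) (hR₀ : 1 < R₀) :
    ∀ x ∈ Icc (1:ℝ) R₀,
      β * min 1 (R₀ ^ (β - 1)) * (x - 1) ≤ x ^ β - 1 ∧
      x ^ β - 1 ≤ β * max 1 (R₀ ^ (β - 1)) * (x - 1) := by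
  have hder : ∀ x ∈ Ioo (1:ℝ) R₀, HasDerivAt (fun y : ℝ => y ^ β) (β * x ^ (β - 1)) x := by
    intro x hx
    have hx0 : x ≠ 0 := by have := hx.1; positivity
    exact Real.hasDerivAt_rpow_const (Or.inl hx0)
  have hcont : ContinuousOn (fun y : ℝ => y ^ β) (Icc 1 R₀) := by
    intro x hx
    exact (Real.continuousAt_rpow_const x β (Or.inl (by have := hx.1; positivity))).continuousWithinAt
  have hbound : ∀ x ∈ Ioo (1:ℝ) R₀,
      min 1 (R₀ ^ (β - 1)) ≤ x ^ (β - 1) ∧ x ^ (β - 1) ≤ max 1 (R₀ ^ (β - 1)) := by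
    intro x hx
    rcases le_or_gt 1 β with hb | hb
    · constructor
      · exact le_trans (min_le_left _ _) (Real.one_le_rpow hx.1.le (by linarith))
      · refine le_trans ?_ (le_max_right _ _)
        exact Real.rpow_le_rpow (by linarith [hx.1]) hx.2.le (by linarith)
    · constructor
      · refine le_trans (min_le_right _ _) ?_
        exact Real.rpow_le_rpow_of_nonpos (by linarith [hx.1]) hx.2.le (by linarith)
      · refine le_trans ?_ (le_max_left _ _)
        exact Real.rpow_le_one_of_one_le_of_nonpos hx.1.le (by linarith)
  intro x hx
  constructor
  · -- lower bound: g y = y^β - 1 - c (y-1) is monotone on [1,R₀]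
    set c := β * min 1 (R₀ ^ (β - 1)) with hc
    have hc0 : 0 ≤ c := by
      apply mul_nonneg hβ
      positivity
    have hmono : MonotoneOn (fun y : ℝ => y ^ β - 1 - c * (y - 1)) (Icc 1 R₀) := by
      apply monotoneOn_of_deriv_nonneg (convex_Icc 1 R₀)
      · exact (hcont.sub continuousOn_const).sub (continuousOn_const.mul (continuousOn_id.sub continuousOn_const))
      · intro y hy
        rw [interior_Icc] at hy
        exact (((hder y hy).sub_const 1).sub ((hasDerivAt_id' y).sub_const 1 |>.const_mul c)).differentiableAt.differentiableWithinAt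
      · intro y hy
        rw [interior_Icc] at hy
        rw [HasDerivAt.deriv (f := fun y : ℝ => y ^ β - 1 - c * (y - 1)) (((hder y hy).sub_const 1).sub ((hasDerivAt_id' y).sub_const 1 |>.const_mul c))]
        have := (hbound y hy).1
        have : c ≤ β * y ^ (β - 1) := by
          rw [hc]; exact mul_le_mul_of_nonneg_left this hβ
        linarith
    have h1 : (fun y : ℝ => y ^ β - 1 - c * (y - 1)) 1 ≤ (fun y : ℝ => y ^ β - 1 - c * (y - 1)) x :=
      hmono (left_mem_Icc.2 hR₀.le) hx hx.1
    simp only [Real.one_rpow] at h1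
    linarith [h1]
  · set c := β * max 1 (R₀ ^ (β - 1)) with hc
    have hmono : MonotoneOn (fun y : ℝ => c * (y - 1) - (y ^ β - 1)) (Icc 1 R₀) := by
      apply monotoneOn_of_deriv_nonneg (convex_Icc 1 R₀)
      · exact (continuousOn_const.mul (continuousOn_id.sub continuousOn_const)).sub (hcont.sub continuousOn_const)
      · intro y hy
        rw [interior_Icc] at hy
        exact (((hasDerivAt_id' y).sub_const 1 |>.const_mul c).sub ((hder y hy).sub_const 1)).differentiableAt.differentiableWithinAt
      · intro y hy
        rw [interior_Icc] at hy
        rw [HasDerivAt.deriv (f := fun y : ℝ => c * (y - 1) - (y ^ β - 1)) (((hasDerivAt_id' y).sub_const 1 |>.const_mul c).sub ((hder y hy).sub_const 1))]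
        have := (hbound y hy).2
        have : β * y ^ (β - 1) ≤ c := by
          rw [hc]; exact mul_le_mul_of_nonneg_left this hβ
        linarith
    have h1 : (fun y : ℝ => c * (y - 1) - (y ^ β - 1)) 1 ≤ (fun y : ℝ => c * (y - 1) - (y ^ β - 1)) x :=
      hmono (left_mem_Icc.2 hR₀.le) hx hx.1
    simp only [Real.one_rpow] at h1
    linarith [h1]

/-- Reverse uniqueness for a scalar linear ODE `h' = k h`: if `h b = 0` then `h 0 = 0`. -/
lemma aux_zero_of_linear_ode {h k : ℝ → ℝ} {b : ℝ} (hb : 0 ≤ b)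
    (hh : ∀ t ∈ Icc (0:ℝ) b, HasDerivAt h (k t * h t) t)
    (hk : ContinuousOn k (Icc (0:ℝ) b))
    (hb0 : h b = 0) : h 0 = 0 := by
  obtain ⟨K, hK⟩ := (isCompact_Icc (a := (0:ℝ)) (b := b)).exists_bound_of_continuousOn hk
  set g : ℝ → ℝ := fun s => h (b - s) with hg
  have hmem : ∀ s ∈ Icc (0:ℝ) b, b - s ∈ Icc (0:ℝ) b := by
    intro s hs; exact ⟨by linarith [hs.2], by linarith [hs.1]⟩
  have hg' : ∀ s ∈ Icc (0:ℝ) b, HasDerivAt g (-(k (b - s) * h (b - s))) s := by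
    intro s hs
    have h1 : HasDerivAt (fun s : ℝ => b - s) (-1) s := (hasDerivAt_id s).const_sub b
    have := (hh (b - s) (hmem s hs)).comp s h1
    exact this.congr_deriv (by ring)
  have key := norm_le_gronwallBound_of_norm_deriv_right_le
    (f := g) (f' := fun s => -(k (b - s) * h (b - s))) (δ := 0) (K := K) (ε := 0) (a := 0) (b := b)
    (fun s hs => (hg' s hs).continuousAt.continuousWithinAt)
    (fun s hs => (hg' s (Ico_subset_Icc_self hs)).hasDerivWithinAt)
    (by simp [hg, hb0])
    (by
      intro s hs
      have hs' := Ico_subset_Icc_self hs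
      have := hK (b - s) (hmem s hs')
      rw [norm_neg, norm_mul]
      have hgn : ‖g s‖ = ‖h (b - s)‖ := rfl
      rw [hgn, add_zero]
      apply mul_le_mul_of_nonneg_right _ (norm_nonneg _)
      exact this)
  have hfin := key b (right_mem_Icc.2 hb)
  rw [gronwallBound_ε0_δ0] at hfin
  have : g b = 0 := norm_le_zero_iff.mp hfin
  simpa [hg] using this

/-- Let `d ≥ 3`, `q ∈ (2-d, 2]`, `C₁ > 0`, and let `R` solve
`R'(t) = C₁ (1 - R(t)^{d+q-2}) R(t)^{1-d}` with `R(0) = R₀ > 1`. Then `R` is (strictly)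
decreasing on `[0,∞)`, stays in `(1, R₀]`, and `|R(t) - 1| ≤ C' e^{-C₁(d+q-2)t}` for some
`C' > 0` and all `t ≥ 0`. -/
theorem stmt2 (d : ℕ) (hd : 3 ≤ d) (q : ℝ) (hq1 : 2 - (d : ℝ) < q) (hq2 : q ≤ 2)
    (C₁ : ℝ) (hC₁ : 0 < C₁) (R : ℝ → ℝ) (R₀ : ℝ) (hR₀ : 1 < R₀) (hinit : R 0 = R₀)
    (hpos : ∀ t : ℝ, 0 ≤ t → 0 < R t)
    (hode : ∀ t : ℝ, 0 ≤ t →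
      HasDerivAt R (C₁ * (1 - (R t) ^ ((d : ℝ) + q - 2)) * (R t) ^ ((1 : ℝ) - d)) t) :
    StrictAntiOn R (Ici 0) ∧ (∀ t : ℝ, 0 ≤ t → R t ∈ Ioc 1 R₀) ∧
      ∃ C' : ℝ, 0 < C' ∧ ∀ t : ℝ, 0 ≤ t →
        |R t - 1| ≤ C' * Real.exp (-(C₁ * ((d : ℝ) + q - 2)) * t) := by
  have hd3 : (3:ℝ) ≤ (d:ℝ) := by exact_mod_cast hd
  set α : ℝ := (d : ℝ) + q - 2 with hαdef
  have hα : 0 < α := by rw [hαdef]; linarith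
  have hR0pos : (0:ℝ) < R₀ := by linarith
  have hRcont : ContinuousOn R (Ici 0) := fun x hx => (hode x hx).continuousAt.continuousWithinAt
  -- derivative of h t = R t ^ α - 1
  have hRa : ∀ t, 0 ≤ t → HasDerivAt (fun s => R s ^ α - 1)
      (-(C₁ * α * R t ^ (q - 2)) * (R t ^ α - 1)) t := by
    intro t ht
    have h1 := ((hode t ht).rpow_const (p := α) (Or.inl (hpos t ht).ne')).sub_const 1
    refine h1.congr_deriv (Eq.symm ?_)
    have hx : R t ^ ((1:ℝ) - (d:ℝ)) * R t ^ (α - 1) = R t ^ (q - 2) := by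
      rw [← Real.rpow_add (hpos t ht)]
      congr 1
      rw [hαdef]; ring
    linear_combination (C₁ * α * (R t ^ α - 1)) * hx
  -- R stays above 1
  have hgt1 : ∀ t, 0 ≤ t → 1 < R t := by
    by_contra hcon
    push_neg at hcon
    obtain ⟨t₁, ht₁, hRt₁⟩ := hcon
    have h0lt : (1:ℝ) < R 0 := by rw [hinit]; exact hR₀
    have hivt : (1:ℝ) ∈ R '' Icc 0 t₁ :=
      intermediate_value_Icc' ht₁ (hRcont.mono Icc_subset_Ici_self) ⟨hRt₁, h0lt.le⟩
    obtain ⟨t₀, ht₀, hRt₀⟩ := hivt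
    have hz := aux_zero_of_linear_ode (h := fun s => R s ^ α - 1)
      (k := fun s => -(C₁ * α * R s ^ (q - 2))) ht₀.1
      (fun s hs => hRa s hs.1)
      (by
        apply ContinuousOn.neg
        apply ContinuousOn.mul continuousOn_const
        apply ContinuousOn.rpow_const
          ((hRcont.mono (Icc_subset_Ici_self)).mono (Icc_subset_Icc_right ht₀.2))
        intro x hx
        exact Or.inl (hpos x hx.1).ne')
      (by simp [hRt₀])
    simp only [hinit] at hz
    have : 1 < R₀ ^ α := Real.one_lt_rpow hR₀ hα
    linarith
  -- strict decrease
  have hSA : StrictAntiOn R (Ici 0) := by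
    apply strictAntiOn_of_deriv_neg (convex_Ici 0) hRcont
    intro x hx
    rw [interior_Ici] at hx
    rw [(hode x hx.le).deriv]
    have h1 : 1 < R x ^ α := Real.one_lt_rpow (hgt1 x hx.le) hα
    have h2 : 0 < R x ^ ((1:ℝ) - (d:ℝ)) := Real.rpow_pos_of_pos (hpos x hx.le) _
    have h3 : C₁ * (1 - R x ^ α) < 0 := mul_neg_of_pos_of_neg hC₁ (by linarith)
    exact mul_neg_of_neg_of_pos h3 h2
  have hmem : ∀ t : ℝ, 0 ≤ t → R t ∈ Ioc 1 R₀ := by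
    intro t ht
    refine ⟨hgt1 t ht, ?_⟩
    rcases eq_or_lt_of_le ht with h | h
    · rw [← h, hinit]
    · rw [← hinit]; exact (hSA self_mem_Ici (le_of_lt h) h).le
  refine ⟨hSA, hmem, ?_⟩
  -- positivity of h
  have hhpos : ∀ t, 0 ≤ t → 0 < R t ^ α - 1 := by
    intro t ht
    have := Real.one_lt_rpow (hgt1 t ht) hα
    linarith
  have hh0 : 0 < R₀ ^ α - 1 := by
    have := Real.one_lt_rpow hR₀ hα; linarith
  -- log derivative
  have hψ : ∀ t, 0 ≤ t → HasDerivAt (fun s => Real.log (R s ^ α - 1))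
      (-(C₁ * α * R t ^ (q - 2))) t := by
    intro t ht
    have h1 := (hRa t ht).log (hhpos t ht).ne'
    have h2 : -(C₁ * α * R t ^ (q - 2)) * (R t ^ α - 1) / (R t ^ α - 1)
        = -(C₁ * α * R t ^ (q - 2)) := by
      rw [mul_div_assoc, div_self (hhpos t ht).ne', mul_one]
    rwa [h2] at h1
  set r : ℝ := R₀ ^ (q - 2) with hrdef
  have hr : 0 < r := Real.rpow_pos_of_pos hR0pos _
  set c₀ : ℝ := C₁ * α * r with hc₀def
  have hc₀ : 0 < c₀ := mul_pos (mul_pos hC₁ hα) hr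
  have hrle : ∀ t, 0 ≤ t → r ≤ R t ^ (q - 2) := by
    intro t ht
    exact Real.rpow_le_rpow_of_nonpos (hpos t ht) (hmem t ht).2 (by linarith)
  -- coarse decay
  have hcoarse0 : ∀ t ∈ Ici (0:ℝ),
      (fun s => Real.log (R s ^ α - 1) + c₀ * s) t ≤ (fun s => Real.log (R s ^ α - 1) + c₀ * s) 0 := by
    apply aux_le_of_deriv_nonpos (f' := fun t => -(C₁ * α * R t ^ (q - 2)) + c₀ * 1)
    · intro t ht
      exact (hψ t ht).add ((hasDerivAt_id' t).const_mul c₀)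
    · intro t ht
      have h1 := hrle t (le_of_lt ht)
      have h2 := mul_le_mul_of_nonneg_left h1 (le_of_lt (mul_pos hC₁ hα))
      rw [hc₀def]
      linarith
  have hcoarse : ∀ t, 0 ≤ t → R t ^ α - 1 ≤ (R₀ ^ α - 1) * Real.exp (-c₀ * t) := by
    intro t ht
    have h1 := hcoarse0 t ht
    simp only [hinit, mul_zero, add_zero] at h1
    have h2 : Real.log (R t ^ α - 1) ≤ Real.log (R₀ ^ α - 1) + -c₀ * t := by linarith
    calc R t ^ α - 1 = Real.exp (Real.log (R t ^ α - 1)) := (Real.exp_log (hhpos t ht)).symm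
      _ ≤ Real.exp (Real.log (R₀ ^ α - 1) + -c₀ * t) := Real.exp_le_exp.2 h2
      _ = (R₀ ^ α - 1) * Real.exp (-c₀ * t) := by rw [Real.exp_add, Real.exp_log hh0]
  -- chord constants
  set cα : ℝ := α * min 1 (R₀ ^ (α - 1)) with hcαdef
  have hcα : 0 < cα := mul_pos hα (lt_min one_pos (Real.rpow_pos_of_pos hR0pos _))
  set Cβ : ℝ := (2 - q) * max 1 (R₀ ^ (2 - q - 1)) with hCβdef
  have hCβ0 : 0 ≤ Cβ := mul_nonneg (by linarith) (le_trans zero_le_one (le_max_left _ _))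
  have hRIcc : ∀ t, 0 ≤ t → R t ∈ Icc 1 R₀ := fun t ht => ⟨(hgt1 t ht).le, (hmem t ht).2⟩
  have hlow : ∀ t, 0 ≤ t → cα * (R t - 1) ≤ R t ^ α - 1 :=
    fun t ht => (aux_rpow_chord α hα.le R₀ hR₀ (R t) (hRIcc t ht)).1
  have hup : ∀ t, 0 ≤ t → R t ^ (2 - q) - 1 ≤ Cβ * (R t - 1) :=
    fun t ht => (aux_rpow_chord (2 - q) (by linarith) R₀ hR₀ (R t) (hRIcc t ht)).2
  set M : ℝ := C₁ * α * Cβ * (R₀ ^ α - 1) / cα with hMdef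
  have hM0 : 0 ≤ M := by
    apply div_nonneg _ hcα.le
    have := mul_pos hC₁ hα
    positivity
  -- fine decay
  have hfine0 : ∀ t ∈ Ici (0:ℝ),
      (fun s => Real.log (R s ^ α - 1) + C₁ * α * s + (M / c₀) * Real.exp (-c₀ * s)) t ≤
      (fun s => Real.log (R s ^ α - 1) + C₁ * α * s + (M / c₀) * Real.exp (-c₀ * s)) 0 := by
    apply aux_le_of_deriv_nonpos
      (f' := fun t => (-(C₁ * α * R t ^ (q - 2)) + C₁ * α * 1) +
        (M / c₀) * (Real.exp (-c₀ * t) * (-c₀ * 1)))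
    · intro t ht
      have hexp : HasDerivAt (fun s : ℝ => Real.exp (-c₀ * s)) (Real.exp (-c₀ * t) * (-c₀ * 1)) t :=
        ((hasDerivAt_id' t).const_mul (-c₀)).exp
      exact ((hψ t ht).add ((hasDerivAt_id' t).const_mul (C₁ * α))).add (hexp.const_mul (M / c₀))
    · intro t ht'
      have ht : 0 ≤ t := le_of_lt ht'
      set E : ℝ := Real.exp (-c₀ * t) with hEdef
      have hE : 0 < E := Real.exp_pos _
      -- 1 - R^{q-2} ≤ R^{2-q} - 1
      have hxy : R t ^ (q - 2) * R t ^ (2 - q) = 1 := by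
        rw [← Real.rpow_add (hpos t ht)]
        norm_num
      have hx1 : R t ^ (q - 2) ≤ 1 :=
        Real.rpow_le_one_of_one_le_of_nonpos (hgt1 t ht).le (by linarith)
      have hy1 : 1 ≤ R t ^ (2 - q) := Real.one_le_rpow (hgt1 t ht).le (by linarith)
      have e1 : 1 - R t ^ (q - 2) ≤ R t ^ (2 - q) - 1 := by nlinarith
      have e2 := hup t ht
      have e3 := hlow t ht
      have e4 := hcoarse t ht
      have h5 : R t - 1 ≤ (R₀ ^ α - 1) * E / cα := by
        rw [le_div_iff₀ hcα, mul_comm]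
        linarith
      have h6 : 1 - R t ^ (q - 2) ≤ Cβ * ((R₀ ^ α - 1) * E / cα) := by
        have := mul_le_mul_of_nonneg_left h5 hCβ0
        linarith
      have key : C₁ * α * (1 - R t ^ (q - 2)) ≤ M * E := by
        calc C₁ * α * (1 - R t ^ (q - 2)) ≤ C₁ * α * (Cβ * ((R₀ ^ α - 1) * E / cα)) :=
              mul_le_mul_of_nonneg_left h6 (le_of_lt (mul_pos hC₁ hα))
          _ = M * E := by rw [hMdef]; field_simp
      have hc : (M / c₀) * (E * (-c₀ * 1)) = -(M * E) := by
        field_simp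
      rw [hc]
      linarith
  -- assemble
  refine ⟨(R₀ ^ α - 1) * Real.exp (M / c₀) / cα, by positivity, ?_⟩
  intro t ht
  have h1 := hfine0 t ht
  simp only [hinit, mul_zero, add_zero, neg_zero, Real.exp_zero, mul_one] at h1
  have h2 : (M / c₀) * Real.exp (-c₀ * t) ≥ 0 := by positivity
  have h3 : Real.log (R t ^ α - 1) ≤ Real.log (R₀ ^ α - 1) + M / c₀ + -(C₁ * α) * t := by
    linarith
  have h4 : R t ^ α - 1 ≤ (R₀ ^ α - 1) * Real.exp (M / c₀) * Real.exp (-(C₁ * α) * t) := by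
    calc R t ^ α - 1 = Real.exp (Real.log (R t ^ α - 1)) := (Real.exp_log (hhpos t ht)).symm
      _ ≤ Real.exp (Real.log (R₀ ^ α - 1) + M / c₀ + -(C₁ * α) * t) := Real.exp_le_exp.2 h3
      _ = (R₀ ^ α - 1) * Real.exp (M / c₀) * Real.exp (-(C₁ * α) * t) := by
          rw [Real.exp_add, Real.exp_add, Real.exp_log hh0]
  have h5 := hlow t ht
  rw [abs_of_nonneg (by linarith [hgt1 t ht])]
  calc R t - 1 ≤ (R t ^ α - 1) / cα := by
        rw [le_div_iff₀ hcα, mul_comm]; linarith [h5]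
    _ ≤ (R₀ ^ α - 1) * Real.exp (M / c₀) * Real.exp (-(C₁ * α) * t) / cα := by
        gcongr
    _ = (R₀ ^ α - 1) * Real.exp (M / c₀) / cα * Real.exp (-(C₁ * α) * t) := by ring
end
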